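/- Let B be a compact, connected, locally connected Polish space with a countable base of connected open sets, and let T be a standard Borel space. If U is a subset of B × T that is open in each fiber (i.e., U ∩ (B × {t}) is open in B × {t} for all t) and Borel in B × T, then U is a countable union of 'open prisms' V × S with V ⊆ B open connected and S ⊆ T Borel. -/

import Mathlib

set_option linter.unusedSectionVars false

open Set Function PiNat MeasureTheory TopologicalSpace Metric Filter

namespace Stmt15

section Nov

variable {T : Type*} [TopologicalSpace T] [PolishSpace T] [MeasurableSpace T] [BorelSpace T]

/-- invariance: membership depends only on the first `n` coordinates of the Baire component. -/
def Inv (n : ℕ) (S : Set (T × (ℕ → ℕ))) : Prop :=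
  ∀ t (α β : ℕ → ℕ), (∀ i < n, α i = β i) → (t, α) ∈ S → (t, β) ∈ S

theorem Inv.mono {n m : ℕ} (h : n ≤ m) {S : Set (T × (ℕ → ℕ))} (hS : Inv n S) : Inv m S :=
  fun t α β hab => hS t α β (fun i hi => hab i (lt_of_lt_of_le hi h))

theorem inv_univ (n : ℕ) : Inv n (Set.univ : Set (T × (ℕ → ℕ))) := fun _ _ _ _ h => h

theorem inv_empty (n : ℕ) : Inv n (∅ : Set (T × (ℕ → ℕ))) := fun _ _ _ _ h => h

theorem Inv.iUnion {n : ℕ} {S : ℕ → Set (T × (ℕ → ℕ))} (hS : ∀ k, Inv n (S k)) :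
    Inv n (⋃ k, S k) := by
  intro t α β hab hm
  simp only [mem_iUnion] at hm ⊢
  exact hm.imp fun k hk => hS k t α β hab hk

theorem Inv.iInter {n : ℕ} {S : ℕ → Set (T × (ℕ → ℕ))} (hS : ∀ k, Inv n (S k)) :
    Inv n (⋂ k, S k) := by
  intro t α β hab hm
  simp only [mem_iInter] at hm ⊢
  exact fun k => hS k t α β hab (hm k)

theorem inv_prod_univ (n : ℕ) (v : Set T) : Inv n (v ×ˢ (Set.univ : Set (ℕ → ℕ))) := by
  intro t α β _ h
  simp only [mem_prod, mem_univ, and_true] at h ⊢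
  exact h

theorem inv_univ_prod_cylinder (n : ℕ) (β₀ : ℕ → ℕ) :
    Inv n ((Set.univ : Set T) ×ˢ cylinder β₀ n) := by
  intro t α β hab h
  simp only [mem_prod, mem_univ, true_and, mem_cylinder_iff] at h ⊢
  intro i hi
  rw [← hab i hi]; exact h i hi

/-- separation of a system of sets by Borel invariant sets with empty intersection. -/
def Sep (h : ℕ → Set (T × (ℕ → ℕ))) : Prop :=
  ∃ Bs : ℕ → Set (T × (ℕ → ℕ)), (∀ i, MeasurableSet (Bs i)) ∧ (∀ n, n ≠ 0 → Inv n (Bs n)) ∧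
    (∀ i, h i ⊆ Bs i) ∧ (⋂ i, Bs i) = ∅

theorem Sep.mono {h h' : ℕ → Set (T × (ℕ → ℕ))} (hs : Sep h) (hle : ∀ i, h' i ⊆ h i) :
    Sep h' := by
  obtain ⟨Bs, h1, h2, h3, h4⟩ := hs
  exact ⟨Bs, h1, h2, fun i => (hle i).trans (h3 i), h4⟩

theorem sep_iUnion {h : ℕ → Set (T × (ℕ → ℕ))} {j : ℕ} {g : ℕ → Set (T × (ℕ → ℕ))}
    (hsub : h j ⊆ ⋃ k, g k) (hk : ∀ k, Sep (Function.update h j (g k))) : Sep h := by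
  choose Bs h1 h2 h3 h4 using hk
  have h3' : ∀ k i, (if i = j then g k else h i) ⊆ Bs k i := by
    intro k i
    have := h3 k i
    rwa [Function.update_apply] at this
  refine ⟨fun i => if i = j then ⋃ k, Bs k j else ⋂ k, Bs k i, ?_, ?_, ?_, ?_⟩
  · intro i
    dsimp only
    by_cases hij : i = j
    · rw [if_pos hij]; exact MeasurableSet.iUnion fun k => h1 k j
    · rw [if_neg hij]; exact MeasurableSet.iInter fun k => h1 k i
  · intro n hn
    dsimp only
    by_cases hij : n = j
    · rw [if_pos hij, hij]
      exact Inv.iUnion fun k => h2 k j (hij ▸ hn)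
    · rw [if_neg hij]
      exact Inv.iInter fun k => h2 k n hn
  · intro i
    dsimp only
    by_cases hij : i = j
    · rw [if_pos hij, hij]
      refine hsub.trans (iUnion_subset fun k => subset_iUnion_of_subset k ?_)
      have := h3' k j
      rwa [if_pos rfl] at this
    · rw [if_neg hij]
      refine subset_iInter fun k => ?_
      have := h3' k i
      rwa [if_neg hij] at this
  · ext x
    simp only [mem_iInter, mem_empty_iff_false, iff_false, not_forall]
    by_contra hcon
    push_neg at hcon
    have hxj := hcon j
    rw [if_pos rfl] at hxj
    simp only [mem_iUnion] at hxj
    obtain ⟨k, hxk⟩ := hxj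
    have hx : x ∈ ⋂ i, Bs k i := by
      refine mem_iInter.2 fun i => ?_
      by_cases hij : i = j
      · rw [hij]; exact hxk
      · have := hcon i
        rw [if_neg hij] at this
        exact mem_iInter.1 this k
    rw [h4 k] at hx
    exact hx

/-- The core tree argument: a structured Novikov separation theorem. -/
theorem structNov_core (gf : ℕ → (ℕ → ℕ) → T × (ℕ → ℕ)) (hg : ∀ i, Continuous (gf i))
    (hInv : ∀ n, n ≠ 0 → Inv n (range (gf n))) (hEmpty : (⋂ i, range (gf i)) = ∅) :
    Sep (fun i => range (gf i)) := by
  classical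
  by_contra hsep
  -- the refinement step
  have step : ∀ (p : (ℕ → (ℕ → ℕ)) × (ℕ → ℕ)),
      ¬ Sep (fun i => gf i '' cylinder (p.1 i) (p.2 i)) → ∀ j, ∃ y,
      y ∈ cylinder (p.1 j) (p.2 j) ∧
      ¬ Sep (fun i => gf i '' cylinder (Function.update p.1 j y i)
        (Function.update p.2 j (p.2 j + 1) i)) := by
    intro p hp j
    by_contra hcon
    push_neg at hcon
    apply hp
    apply sep_iUnion (j := j)
      (g := fun k => gf j '' cylinder (Function.update (p.1 j) (p.2 j) k) (p.2 j + 1))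
    · rw [← image_iUnion, ← iUnion_cylinder_update (p.1 j) (p.2 j)]
    · intro k
      have hy := hcon (Function.update (p.1 j) (p.2 j) k) (update_mem_cylinder _ _ _)
      convert hy using 1
      funext i
      rcases eq_or_ne i j with rfl | hij
      · simp [Function.update_self]
      · simp [Function.update_of_ne hij]
  -- dovetailing schedule
  set e : ℕ → ℕ := fun k => (Nat.unpair k).1 with he
  -- iterated refinement
  set A := {p : (ℕ → (ℕ → ℕ)) × (ℕ → ℕ) // ¬ Sep (fun i => gf i '' cylinder (p.1 i) (p.2 i))}
    with hA
  have stepA : ∀ (k : ℕ) (a : A), ∃ b : A,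
      (∀ i, b.1.2 i = if i = e k then a.1.2 i + 1 else a.1.2 i) ∧
      (∀ i m, m < a.1.2 i → b.1.1 i m = a.1.1 i m) := by
    intro k a
    obtain ⟨hy1, hy2⟩ := Classical.choose_spec (step a.1 a.2 (e k))
    refine ⟨⟨(Function.update a.1.1 (e k) (Classical.choose (step a.1 a.2 (e k))),
      Function.update a.1.2 (e k) (a.1.2 (e k) + 1)), hy2⟩, ?_, ?_⟩
    · intro i
      simp only [Function.update_apply]
      by_cases hik : i = e k
      · rw [if_pos hik, if_pos hik, hik]
      · rw [if_neg hik, if_neg hik]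
    · intro i m hm
      dsimp only
      by_cases hik : i = e k
      · subst hik
        rw [Function.update_self]
        exact mem_cylinder_iff.1 hy1 m hm
      · rw [Function.update_of_ne hik]
  choose F hF2 hF1 using stepA
  have p0bad : ¬ Sep (fun i => gf i ''
      cylinder ((fun _ => (fun _ => 0 : ℕ → ℕ)) i) ((fun _ => 0 : ℕ → ℕ) i)) := by
    simp only [cylinder_zero, image_univ]
    exact hsep
  set p0 : A := ⟨⟨fun _ => fun _ => 0, fun _ => 0⟩, p0bad⟩ with hp0
  set seq : ℕ → A := fun k => Nat.rec p0 (fun k ih => F k ih) k with hseq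
  have seq_succ : ∀ k, seq (k + 1) = F k (seq k) := fun k => rfl
  set L : ℕ → ℕ → ℕ := fun k i => (seq k).1.2 i with hL
  set x : ℕ → ℕ → (ℕ → ℕ) := fun k i => (seq k).1.1 i with hx
  have L_succ : ∀ k i, L (k + 1) i = if i = e k then L k i + 1 else L k i := by
    intro k i
    simp only [hL, seq_succ]
    exact hF2 k (seq k) i
  have L_mono : ∀ k i, L k i ≤ L (k + 1) i := by
    intro k i
    rw [L_succ]
    split <;> omega
  have L_le : ∀ {k k'} (_ : k ≤ k') (i : ℕ), L k i ≤ L k' i := by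
    intro k k' h i
    induction h with
    | refl => exact le_rfl
    | step h ih => exact ih.trans (L_mono _ i)
  have L_unbounded : ∀ i N, ∃ k, N ≤ L k i := by
    intro i N
    induction N with
    | zero => exact ⟨0, Nat.zero_le _⟩
    | succ N ih =>
      obtain ⟨k, hk⟩ := ih
      refine ⟨Nat.pair i k + 1, ?_⟩
      have he' : e (Nat.pair i k) = i := by rw [he]; simp
      have h1 : L (Nat.pair i k + 1) i = L (Nat.pair i k) i + 1 := by
        rw [L_succ, if_pos he'.symm]
      have h2 := L_le (Nat.right_le_pair i k) i
      omega
  -- prefix stability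
  have x_succ : ∀ k i m, m < L k i → x (k + 1) i m = x k i m := by
    intro k i m hm
    simp only [hx, seq_succ]
    exact hF1 k (seq k) i m hm
  have x_stab : ∀ {k k'} (_ : k ≤ k') (i m : ℕ), m < L k i → x k' i m = x k i m := by
    intro k k' h i m hm
    induction h with
    | refl => rfl
    | @step k'' h ih =>
      rw [x_succ k'' i m (lt_of_lt_of_le hm (L_le h i)), ih]
  -- the limit point
  have Hfind : ∀ i m : ℕ, ∃ k, m < L k i := fun i m => L_unbounded i (m + 1)
  set ξ : ℕ → (ℕ → ℕ) := fun i m => x (Nat.find (Hfind i m)) i m with hξ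
  have ξ_eq : ∀ k i m, m < L k i → x k i m = ξ i m := by
    intro k i m hm
    rw [hξ]
    have h1 : Nat.find (Hfind i m) ≤ k := Nat.find_le hm
    exact x_stab h1 i m (Nat.find_spec (Hfind i m))
  have cyl_eq : ∀ k i, cylinder (ξ i) (L k i) = cylinder (x k i) (L k i) := by
    intro k i
    ext y
    rw [mem_cylinder_iff, mem_cylinder_iff]
    constructor <;> intro h m hm
    · rw [h m hm, ← ξ_eq k i m hm]
    · rw [h m hm, ξ_eq k i m hm]
  have Mbad : ∀ k, ¬ Sep (fun i => gf i '' cylinder (ξ i) (L k i)) := by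
    intro k
    have h2 : (fun i => gf i '' cylinder (ξ i) (L k i))
        = fun i => gf i '' cylinder (x k i) (L k i) := by
      funext i; rw [cyl_eq k i]
    rw [h2]
    exact (seq k).2
  -- the limit points
  set P : ℕ → T × (ℕ → ℕ) := fun i => gf i (ξ i) with hP
  -- continuity: images of small cylinders lie in a given open neighborhood
  have cont : ∀ (i : ℕ) (u : Set (T × (ℕ → ℕ))), IsOpen u → P i ∈ u →
      ∃ M : ℕ, gf i '' cylinder (ξ i) M ⊆ u := by
    intro i u hu hPu
    letI : MetricSpace (ℕ → ℕ) := PiNat.metricSpaceNatNat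
    obtain ⟨ε, εpos, hε⟩ : ∃ ε > 0, Metric.ball (ξ i) ε ⊆ gf i ⁻¹' u := by
      apply Metric.mem_nhds_iff.1
      exact (hg i).continuousAt.preimage_mem_nhds (hu.mem_nhds hPu)
    obtain ⟨M, hM⟩ : ∃ M : ℕ, (1 / 2 : ℝ) ^ M < ε :=
      exists_pow_lt_of_lt_one εpos (by norm_num)
    refine ⟨M, ?_⟩
    rw [image_subset_iff]
    refine fun y hy => hε ?_
    rw [Metric.mem_ball]
    exact lt_of_le_of_lt (mem_cylinder_iff_dist_le.1 hy) hM
  -- case analysis on the limit points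
  by_cases hcase : ∀ n, n ≠ 0 → (P n).1 = (P 0).1 ∧ ∀ m < n, (P n).2 m = (P 0).2 m
  · -- all limit points agree: contradiction with hEmpty
    have : P 0 ∈ ⋂ i, range (gf i) := by
      refine mem_iInter.2 fun i => ?_
      rcases eq_or_ne i 0 with rfl | hi
      · exact mem_range_self _
      · obtain ⟨h1, h2⟩ := hcase i hi
        have hPi : ((P i).1, (P i).2) ∈ range (gf i) := by
          rw [Prod.mk.eta]
          exact mem_range_self _
        have := hInv i hi (P i).1 (P i).2 (P 0).2 h2 hPi
        rw [h1] at this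
        simpa using this
    rw [hEmpty] at this
    exact this
  · push_neg at hcase
    obtain ⟨n, hn0, hdiff⟩ := hcase
    -- find disjoint invariant open sets separating P n and P 0
    have hsepsets : ∃ u v : Set (T × (ℕ → ℕ)), IsOpen u ∧ IsOpen v ∧ Inv n u ∧
        P n ∈ u ∧ P 0 ∈ v ∧ u ∩ v = ∅ := by
      by_cases ht : (P n).1 = (P 0).1
      · -- then the Baire parts differ below n
        have := hdiff ht
        obtain ⟨m, hmn, hm⟩ := this
        refine ⟨Set.univ ×ˢ cylinder ((P n).2) n, Set.univ ×ˢ cylinder ((P 0).2) n,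
          isOpen_univ.prod (isOpen_cylinder _ _ _), isOpen_univ.prod (isOpen_cylinder _ _ _),
          inv_univ_prod_cylinder n _, ?_, ?_, ?_⟩
        · exact ⟨mem_univ _, self_mem_cylinder _ _⟩
        · exact ⟨mem_univ _, self_mem_cylinder _ _⟩
        · ext z
          simp only [mem_inter_iff, mem_prod, mem_univ, true_and, mem_cylinder_iff,
            mem_empty_iff_false, iff_false, not_and]
          intro h1 h2
          exact hm ((h1 m hmn).symm.trans (h2 m hmn))
      · obtain ⟨u1, v1, hu1, hv1, hPu1, hPv1, huv1⟩ := t2_separation ht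
        refine ⟨u1 ×ˢ Set.univ, v1 ×ˢ Set.univ, hu1.prod isOpen_univ, hv1.prod isOpen_univ,
          inv_prod_univ n u1, ⟨hPu1, mem_univ _⟩, ⟨hPv1, mem_univ _⟩, ?_⟩
        ext z
        simp only [mem_inter_iff, mem_prod, mem_univ, and_true, mem_empty_iff_false,
          iff_false, not_and]
        intro h1 h2
        exact absurd (huv1.ne_of_mem h1 h2) (fun h => h rfl)
    obtain ⟨u, v, hu, hv, hinvu, hPnu, hP0v, huv⟩ := hsepsets
    obtain ⟨Mn, hMn⟩ := cont n u hu hPnu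
    obtain ⟨M0, hM0⟩ := cont 0 v hv hP0v
    obtain ⟨k1, hk1⟩ := L_unbounded n Mn
    obtain ⟨k2, hk2⟩ := L_unbounded 0 M0
    set k := max k1 k2 with hk
    have hkn : Mn ≤ L k n := hk1.trans (L_le (le_max_left _ _) n)
    have hk0 : M0 ≤ L k 0 := hk2.trans (L_le (le_max_right _ _) 0)
    apply Mbad k
    refine ⟨fun i => if i = n then u else if i = 0 then v else Set.univ, ?_, ?_, ?_, ?_⟩
    · intro i
      dsimp only
      by_cases h1 : i = n
      · rw [if_pos h1]; exact hu.measurableSet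
      · rw [if_neg h1]
        by_cases h2 : i = 0
        · rw [if_pos h2]; exact hv.measurableSet
        · rw [if_neg h2]; exact MeasurableSet.univ
    · intro m hm
      dsimp only
      by_cases h1 : m = n
      · rw [if_pos h1, h1]; exact h1 ▸ hinvu
      · rw [if_neg h1]
        by_cases h2 : m = 0
        · exact absurd h2 hm
        · rw [if_neg h2]; exact inv_univ m
    · intro i
      dsimp only
      by_cases h1 : i = n
      · rw [if_pos h1, h1]
        exact (image_mono (cylinder_anti _ hkn)).trans hMn
      · rw [if_neg h1]
        by_cases h2 : i = 0
        · rw [if_pos h2, h2]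
          exact (image_mono (cylinder_anti _ hk0)).trans hM0
        · rw [if_neg h2]; exact subset_univ _
    · have h1 : (⋂ i, (fun i => if i = n then u else if i = 0 then v else Set.univ) i)
          ⊆ u ∩ v := by
        intro z hz
        have hzn := mem_iInter.1 hz n
        have hz0 := mem_iInter.1 hz 0
        rw [if_pos rfl] at hzn
        rw [if_neg (Ne.symm hn0), if_pos rfl] at hz0
        exact ⟨hzn, hz0⟩
      rw [eq_empty_iff_forall_notMem]
      intro z hz
      have := h1 hz
      rw [huv] at this
      exact this

/-- Novikov separation for analytic sets, structured version. -/
theorem structNov (R : ℕ → Set (T × (ℕ → ℕ))) (hR : ∀ n, AnalyticSet (R n))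
    (hInv : ∀ n, n ≠ 0 → Inv n (R n)) (hEmpty : (⋂ i, R i) = ∅) : Sep R := by
  by_cases hne : ∀ n, (R n).Nonempty
  · have hpres : ∀ n, ∃ f : (ℕ → ℕ) → T × (ℕ → ℕ), Continuous f ∧ range f = R n := by
      intro n
      have h := hR n
      rw [AnalyticSet] at h
      rcases h with h | ⟨f, hf, hrange⟩
      · have := hne n
        rw [h] at this
        simp at this
      · exact ⟨f, hf, hrange⟩
    choose gf hgc hgr using hpres
    have heq : R = fun i => range (gf i) := by funext i; rw [hgr]
    rw [heq]
    refine structNov_core gf hgc (fun n hn => ?_) ?_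
    · rw [hgr]; exact hInv n hn
    · rw [← heq]; exact hEmpty
  · push_neg at hne
    obtain ⟨n0, hn0⟩ := hne
    refine ⟨fun i => if i = n0 then ∅ else Set.univ, ?_, ?_, ?_, ?_⟩
    · intro i
      dsimp only
      split
      · exact MeasurableSet.empty
      · exact MeasurableSet.univ
    · intro n _
      dsimp only
      split
      · exact inv_empty n
      · exact inv_univ n
    · intro i
      dsimp only
      split
      · next h => rw [h, hn0]
      · exact subset_univ _
    · rw [eq_empty_iff_forall_notMem]
      intro z hz
      have := mem_iInter.1 hz n0
      rw [if_pos rfl] at this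
      exact this

theorem Inv.isClosed_section {n : ℕ} {S : Set (T × (ℕ → ℕ))} (hS : Inv n S) (t : T) :
    IsClosed {α : ℕ → ℕ | (t, α) ∈ S} := by
  rw [← isOpen_compl_iff]
  rw [isOpen_iff_mem_nhds]
  intro α hα
  refine mem_of_superset ((isOpen_cylinder _ _ _).mem_nhds (self_mem_cylinder α n)) ?_
  intro β hβ hmem
  exact hα (hS t β α (fun i hi => mem_cylinder_iff.1 hβ i hi) hmem)

end Nov

section Proj

variable {B : Type*} [MetricSpace B] [CompactSpace B] [SecondCountableTopology B]
  [MeasurableSpace B] [BorelSpace B]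
  {T : Type*} [TopologicalSpace T] [PolishSpace T] [MeasurableSpace T] [BorelSpace T]

/-- Projection of a Borel set with closed fibers along a compact factor is Borel. -/
theorem measurableSet_exists_mem_compact (D : Set (B × T)) (hD : MeasurableSet D)
    (hcl : ∀ t, IsClosed {b : B | (b, t) ∈ D}) {K : Set B} (hK : IsCompact K) :
    MeasurableSet {t : T | ∃ b ∈ K, (b, t) ∈ D} := by
  classical
  rcases K.eq_empty_or_nonempty with rfl | hKne
  · simp
  haveI : Nonempty B := ⟨hKne.choose⟩
  -- finite nets at every scale
  have hnet : ∀ n : ℕ, ∃ (N : ℕ) (c : ℕ → B), ∀ b : B, ∃ i < N, dist b (c i) < (1/2)^n := by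
    intro n
    obtain ⟨t, -, hfin, hcov⟩ := finite_cover_balls_of_compact (isCompact_univ (X := B))
      (pow_pos (by norm_num : (0:ℝ) < 1/2) n)
    set l := hfin.toFinset.toList with hll
    refine ⟨l.length, fun i => l.getD i (Classical.arbitrary B), fun b => ?_⟩
    have hb := hcov (mem_univ b)
    simp only [mem_iUnion] at hb
    obtain ⟨x, hxt, hbx⟩ := hb
    have hxl : x ∈ l := by
      rw [hll]
      simp only [Finset.mem_toList, Set.Finite.mem_toFinset]
      exact hxt
    obtain ⟨i, hi⟩ := List.mem_iff_get.1 hxl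
    refine ⟨i.1, i.2, ?_⟩
    have hgd : l.getD i.1 (Classical.arbitrary B) = x := by
      rw [List.getD_eq_getElem l _ i.2, ← List.get_eq_getElem]
      exact hi
    dsimp only
    rw [hgd]
    exact mem_ball.1 hbx
  choose N c hc using hnet
  -- the closed scheme
  set G : (ℕ → ℕ) → ℕ → Set B := fun α n =>
    K ∩ ⋂ k ∈ Finset.range n, (if α k < N k then closedBall (c k (α k)) ((1/2)^k) else ∅)
    with hG
  have hGzero : ∀ α, G α 0 = K := by
    intro α
    rw [hG]
    simp
  have hGanti : ∀ (α) {m n : ℕ}, m ≤ n → G α n ⊆ G α m := by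
    intro α m n hmn
    refine inter_subset_inter_right _ ?_
    exact biInter_subset_biInter_left (fun k hk => Finset.mem_range.2
      (lt_of_lt_of_le (Finset.mem_range.1 hk) hmn))
  have hGclosed : ∀ α n, IsClosed (G α n) := by
    intro α n
    refine hK.isClosed.inter (isClosed_biInter fun k _ => ?_)
    split
    · exact isClosed_closedBall
    · exact isClosed_empty
  have hGdep : ∀ (α β : ℕ → ℕ) (n : ℕ), (∀ k < n, α k = β k) → G α n = G β n := by
    intro α β n hab
    rw [hG]
    refine congrArg (K ∩ ·) ?_
    refine Set.iInter₂_congr fun k hk => ?_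
    rw [hab k (Finset.mem_range.1 hk)]
  have hGmem : ∀ (α : ℕ → ℕ) (n : ℕ) (b : B), b ∈ G α (n+1) →
      α n < N n ∧ b ∈ closedBall (c n (α n)) ((1/2)^n) := by
    intro α n b hb
    have := mem_iInter₂.1 hb.2 n (Finset.mem_range.2 (Nat.lt_succ_self n))
    by_cases h : α n < N n
    · rw [if_pos h] at this
      exact ⟨h, this⟩
    · rw [if_neg h] at this
      exact absurd this (notMem_empty b)
  have hGdiam : ∀ (α : ℕ → ℕ) (n : ℕ) (b b' : B), b ∈ G α (n+1) → b' ∈ G α (n+1) →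
      dist b b' ≤ (1/2)^n * 2 := by
    intro α n b b' hb hb'
    have h1 := (hGmem α n b hb).2
    have h2 := (hGmem α n b' hb').2
    rw [mem_closedBall] at h1 h2
    calc dist b b' ≤ dist b (c n (α n)) + dist b' (c n (α n)) := dist_triangle_right _ _ _
    _ ≤ (1/2)^n + (1/2)^n := add_le_add h1 h2
    _ = (1/2)^n * 2 := by ring
  -- uniqueness of branch limits
  have hGuniq : ∀ (α : ℕ → ℕ) (b b' : B), (∀ n, b ∈ G α n) → (∀ n, b' ∈ G α n) → b = b' := by
    intro α b b' hb hb'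
    by_contra hne
    have hd : 0 < dist b b' / 2 := by
      have := dist_pos.2 hne
      linarith
    obtain ⟨n, hn⟩ := exists_pow_lt_of_lt_one hd (by norm_num : (1/2 : ℝ) < 1)
    have := hGdiam α n b b' (hb (n+1)) (hb' (n+1))
    have h2 : (1/2 : ℝ)^n * 2 < dist b b' := by linarith
    linarith
  -- the analytic system
  set At : ℕ → Set (T × (ℕ → ℕ)) := fun n => {p | ∃ b ∈ G p.2 n, (b, p.1) ∈ D} with hAt
  set Ep : Set (T × (ℕ → ℕ)) := {p | ∃ b, (∀ n, b ∈ G p.2 n) ∧ (b, p.1) ∈ D} with hEp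
  have hInvA : ∀ n, Inv n (At n) := by
    intro n t α β hab hm
    obtain ⟨b, hb1, hb2⟩ := hm
    exact ⟨b, (hGdep α β n hab) ▸ hb1, hb2⟩
  -- measurability of auxiliary sets upstairs
  have hMset : ∀ n : ℕ, MeasurableSet {q : (B × T) × (ℕ → ℕ) | q.1 ∈ D ∧ q.1.1 ∈ G q.2 n} := by
    intro n
    have heq : {q : (B × T) × (ℕ → ℕ) | q.1 ∈ D ∧ q.1.1 ∈ G q.2 n} =
        ({q : (B × T) × (ℕ → ℕ) | q.1 ∈ D} ∩ {q : (B × T) × (ℕ → ℕ) | q.1.1 ∈ K}) ∩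
          ⋂ k ∈ Finset.range n,
          ({q : (B × T) × (ℕ → ℕ) | q.2 k < N k} ∩
           {q : (B × T) × (ℕ → ℕ) | dist q.1.1 (c k (q.2 k)) ≤ (1/2)^k}) := by
      ext q
      simp only [hG, mem_inter_iff, mem_iInter, mem_setOf_eq, Finset.mem_range]
      constructor
      · rintro ⟨h1, h2, h3⟩
        refine ⟨⟨h1, h2⟩, fun k hk => ?_⟩
        have hx := h3 k hk
        by_cases h : q.2 k < N k
        · rw [if_pos h] at hx
          exact ⟨h, mem_closedBall.1 hx⟩
        · rw [if_neg h] at hx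
          exact absurd hx (notMem_empty _)
      · rintro ⟨⟨h1, h2⟩, h3⟩
        refine ⟨h1, h2, fun k hk => ?_⟩
        obtain ⟨ha, hb⟩ := h3 k hk
        rw [if_pos ha]
        exact mem_closedBall.2 hb
    rw [heq]
    refine ((hD.preimage measurable_fst).inter
      ((hK.isClosed.measurableSet).preimage (measurable_fst.comp measurable_fst))).inter ?_
    refine MeasurableSet.biInter (Finset.range n).countable_toSet fun k _ => ?_
    refine MeasurableSet.inter ?_ ?_
    · exact measurableSet_lt (measurable_snd.eval (a := k)) measurable_const
    · refine measurableSet_le (Measurable.dist ?_ ?_) measurable_const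
      · exact measurable_fst.comp measurable_fst
      · exact Measurable.comp measurable_from_top (measurable_snd.eval (a := k))
  haveI : PolishSpace B := inferInstance
  -- `At n` is analytic
  have hAna : ∀ n, AnalyticSet (At n) := by
    intro n
    have himg : At n = (fun q : (B × T) × (ℕ → ℕ) => (q.1.2, q.2)) ''
        {q : (B × T) × (ℕ → ℕ) | q.1 ∈ D ∧ q.1.1 ∈ G q.2 n} := by
      ext p
      constructor
      · rintro ⟨b, hb1, hb2⟩
        exact ⟨((b, p.1), p.2), ⟨hb2, hb1⟩, rfl⟩
      · rintro ⟨q, ⟨h1, h2⟩, rfl⟩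
        exact ⟨q.1.1, h2, by rw [Prod.mk.eta]; exact h1⟩
    rw [himg]
    exact (hMset n).analyticSet_image
      ((measurable_snd.comp measurable_fst).prodMk measurable_snd)
  -- `Ep` is Borel
  have hEpm : MeasurableSet Ep := by
    have himg : Ep = (fun q : (B × T) × (ℕ → ℕ) => (q.1.2, q.2)) ''
        {q : (B × T) × (ℕ → ℕ) | q.1 ∈ D ∧ ∀ n, q.1.1 ∈ G q.2 n} := by
      ext p
      constructor
      · rintro ⟨b, hb1, hb2⟩
        exact ⟨((b, p.1), p.2), ⟨hb2, hb1⟩, rfl⟩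
      · rintro ⟨q, ⟨h1, h2⟩, rfl⟩
        exact ⟨q.1.1, h2, by rw [Prod.mk.eta]; exact h1⟩
    have hmeas : MeasurableSet {q : (B × T) × (ℕ → ℕ) | q.1 ∈ D ∧ ∀ n, q.1.1 ∈ G q.2 n} := by
      have heq2 : {q : (B × T) × (ℕ → ℕ) | q.1 ∈ D ∧ ∀ n, q.1.1 ∈ G q.2 n} =
          ⋂ n, {q : (B × T) × (ℕ → ℕ) | q.1 ∈ D ∧ q.1.1 ∈ G q.2 n} := by
        ext q
        simp only [mem_iInter, mem_setOf_eq]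
        constructor
        · rintro ⟨h1, h2⟩ n
          exact ⟨h1, h2 n⟩
        · intro h
          exact ⟨(h 0).1, fun n => (h n).2⟩
      rw [heq2]
      exact MeasurableSet.iInter hMset
    rw [himg]
    refine hmeas.image_of_measurable_injOn
      ((measurable_snd.comp measurable_fst).prodMk measurable_snd) ?_
    rintro q ⟨hq1, hq2⟩ q' ⟨hq1', hq2'⟩ heq
    have heq' : (q.1.2, q.2) = (q'.1.2, q'.2) := heq
    have ht : q.1.2 = q'.1.2 := (Prod.ext_iff.1 heq').1
    have ha : q.2 = q'.2 := (Prod.ext_iff.1 heq').2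
    have hb : q.1.1 = q'.1.1 := hGuniq q.2 _ _ hq2 (by rw [ha]; exact hq2')
    exact Prod.ext (Prod.ext hb ht) ha
  -- assemble the system and apply the separation theorem
  set R : ℕ → Set (T × (ℕ → ℕ)) := fun i => Nat.casesOn i Epᶜ (fun n => At n) with hR
  have hRana : ∀ i, AnalyticSet (R i) := by
    intro i
    cases i with
    | zero => exact hEpm.compl.analyticSet
    | succ n => exact hAna n
  have hRinv : ∀ i, i ≠ 0 → Inv i (R i) := by
    intro i hi
    cases i with
    | zero => exact absurd rfl hi
    | succ n => exact (hInvA n).mono (Nat.le_succ n)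
  have hRempty : (⋂ i, R i) = ∅ := by
    rw [eq_empty_iff_forall_notMem]
    intro p hp
    have h0 := mem_iInter.1 hp 0
    have hs : ∀ n, p ∈ At n := fun n => mem_iInter.1 hp (n+1)
    set C : ℕ → Set B := fun n => G p.2 n ∩ {b | (b, p.1) ∈ D} with hC
    have hCne : ∀ n, (C n).Nonempty := by
      intro n
      obtain ⟨b, hb1, hb2⟩ := hs n
      exact ⟨b, hb1, hb2⟩
    have hCcl : ∀ n, IsClosed (C n) := fun n => (hGclosed p.2 n).inter (hcl p.1)
    have hCsub : ∀ n, C (n+1) ⊆ C n :=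
      fun n => inter_subset_inter_left _ (hGanti p.2 (Nat.le_succ n))
    have hCcomp : IsCompact (C 0) := by
      refine hK.of_isClosed_subset (hCcl 0) ?_
      intro b hb
      have := hb.1
      rw [hGzero p.2] at this
      exact this
    obtain ⟨b, hb⟩ := IsCompact.nonempty_iInter_of_sequence_nonempty_isCompact_isClosed
      C hCsub hCne hCcomp hCcl
    exact h0 ⟨b, fun n => (mem_iInter.1 hb n).1, (mem_iInter.1 hb 0).2⟩
  obtain ⟨Bs, hBm, hBinv, hBsub, hBempty⟩ := structNov R hRana hRinv hRempty
  -- finitely many representatives at each level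
  set Reps : ℕ → Set (ℕ → ℕ) := fun n => {α | (∀ k, α k ≤ N k) ∧ ∀ k, n < k → α k = 0}
    with hReps
  have hRepsFin : ∀ n, (Reps n).Finite := by
    intro n
    have hsub : (fun (α : ℕ → ℕ) (k : Fin (n+1)) => α k.1) '' Reps n ⊆
        Set.pi univ (fun k : Fin (n+1) => Set.Iic (N k.1)) := by
      rintro g ⟨α, hα, rfl⟩
      intro k _
      exact hα.1 k.1
    have hfinimg : ((fun (α : ℕ → ℕ) (k : Fin (n+1)) => α k.1) '' Reps n).Finite :=
      (Set.Finite.pi fun k => Set.finite_Iic _).subset hsub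
    refine Set.Finite.of_finite_image hfinimg ?_
    rintro α hα α' hα' heq
    funext k
    by_cases hk : k ≤ n
    · exact congrFun heq ⟨k, by omega⟩
    · rw [hα.2 k (by omega), hα'.2 k (by omega)]
  -- the level sets
  have hLev : ∀ n, MeasurableSet
      {t : T | ∃ α, (∀ k, α k ≤ N k) ∧ ∀ m ≤ n, (t, α) ∈ Bs (m+1)} := by
    intro n
    have heq : {t : T | ∃ α, (∀ k, α k ≤ N k) ∧ ∀ m ≤ n, (t, α) ∈ Bs (m+1)} =
        ⋃ α₀ ∈ Reps n, ⋂ m ∈ Set.Iic n, {t : T | (t, α₀) ∈ Bs (m+1)} := by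
      ext t
      simp only [mem_iUnion, mem_iInter, mem_setOf_eq, Set.mem_Iic, exists_prop]
      constructor
      · rintro ⟨α, hαb, hα⟩
        refine ⟨fun k => if k ≤ n then α k else 0, ⟨fun k => ?_, fun k hk => ?_⟩,
          fun m hm => ?_⟩
        · dsimp only
          by_cases h : k ≤ n
          · rw [if_pos h]; exact hαb k
          · rw [if_neg h]; exact Nat.zero_le _
        · dsimp only
          rw [if_neg (by omega)]
        · refine hBinv (m+1) (Nat.succ_ne_zero m) t α _ (fun i hi => ?_) (hα m hm)
          rw [if_pos (by omega)]
      · rintro ⟨α₀, hα₀, hm⟩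
        exact ⟨α₀, hα₀.1, hm⟩
    rw [heq]
    refine Set.Finite.measurableSet_biUnion (hRepsFin n) fun α₀ _ => ?_
    refine MeasurableSet.biInter (Set.to_countable _) fun m _ => ?_
    exact (hBm (m+1)).preimage measurable_prodMk_right
  -- the final identity
  have hfinal : {t : T | ∃ b ∈ K, (b, t) ∈ D} =
      ⋂ n, {t : T | ∃ α, (∀ k, α k ≤ N k) ∧ ∀ m ≤ n, (t, α) ∈ Bs (m+1)} := by
    ext t
    simp only [mem_iInter, mem_setOf_eq]
    constructor
    · rintro ⟨b, hbK, hbD⟩ n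
      choose i hiN hid using fun k => hc k b
      have hbG : ∀ m, b ∈ G i m := by
        intro m
        refine ⟨hbK, mem_iInter₂.2 fun k _ => ?_⟩
        rw [if_pos (hiN k)]
        exact mem_closedBall.2 (le_of_lt (hid k))
      refine ⟨i, fun k => le_of_lt (hiN k), fun m _ => ?_⟩
      exact hBsub (m+1) ⟨b, hbG m, hbD⟩
    · intro h
      set S : ℕ → Set (ℕ → ℕ) :=
        fun n => {α | (∀ k, α k ≤ N k) ∧ ∀ m ≤ n, (t, α) ∈ Bs (m+1)} with hS
      have hSne : ∀ n, (S n).Nonempty := by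
        intro n
        obtain ⟨α, h1, h2⟩ := h n
        exact ⟨α, h1, h2⟩
      have hScl : ∀ n, IsClosed (S n) := by
        intro n
        have : S n = {α : ℕ → ℕ | ∀ k, α k ≤ N k} ∩
            ⋂ m ∈ Set.Iic n, {α : ℕ → ℕ | (t, α) ∈ Bs (m+1)} := by
          ext α
          simp only [hS, mem_inter_iff, mem_iInter, mem_setOf_eq, Set.mem_Iic]
        rw [this]
        refine IsClosed.inter ?_ ?_
        · have h2 : {α : ℕ → ℕ | ∀ k, α k ≤ N k} =
              ⋂ k, (fun α : ℕ → ℕ => α k) ⁻¹' (Set.Iic (N k)) := by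
            ext α
            simp [Set.mem_Iic]
          rw [h2]
          exact isClosed_iInter fun k =>
            IsClosed.preimage (continuous_apply k) (isClosed_discrete _)
        · exact isClosed_biInter fun m _ =>
            (hBinv (m+1) (Nat.succ_ne_zero m)).isClosed_section t
      have hSsub : ∀ n, S (n+1) ⊆ S n :=
        fun n α hα => ⟨hα.1, fun m hm => hα.2 m (hm.trans (Nat.le_succ n))⟩
      have hScomp : IsCompact (S 0) := by
        have hΛ : IsCompact {α : ℕ → ℕ | ∀ k, α k ≤ N k} := by
          have hpi : {α : ℕ → ℕ | ∀ k, α k ≤ N k} =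
              Set.pi univ (fun k => Set.Iic (N k)) := by
            ext α
            constructor
            · intro hα k _
              exact hα k
            · intro hα k
              exact hα k (mem_univ k)
          rw [hpi]
          exact isCompact_univ_pi fun k => (Set.finite_Iic _).isCompact
        exact hΛ.of_isClosed_subset (hScl 0) (fun α hα => hα.1)
      obtain ⟨α, hα⟩ := IsCompact.nonempty_iInter_of_sequence_nonempty_isCompact_isClosed
        S hSsub hSne hScomp hScl
      have hαn : ∀ m, (t, α) ∈ Bs (m+1) := fun m => (mem_iInter.1 hα m).2 m le_rfl
      have hα0 : (t, α) ∉ Bs 0 := by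
        intro h0
        have hall : (t, α) ∈ ⋂ i, Bs i := by
          refine mem_iInter.2 fun i => ?_
          cases i with
          | zero => exact h0
          | succ m => exact hαn m
        rw [hBempty] at hall
        exact hall
      have hEpmem : (t, α) ∈ Ep := by
        by_contra hno
        exact hα0 (hBsub 0 hno)
      obtain ⟨b, hb1, hb2⟩ := hEpmem
      refine ⟨b, ?_, hb2⟩
      have := hb1 0
      rw [hGzero α] at this
      exact this
  rw [show {t : T | ∃ b ∈ K, (b, t) ∈ D} =
    ⋂ n, {t : T | ∃ α, (∀ k, α k ≤ N k) ∧ ∀ m ≤ n, (t, α) ∈ Bs (m+1)} from hfinal]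
  exact MeasurableSet.iInter hLev

/-- the key fact: `{t | V ⊆ U_t}` is Borel for open `V`. -/
theorem measurableSet_forall_mem_open (U : Set (B × T)) (hU : MeasurableSet U)
    (hopen : ∀ t, IsOpen {b : B | (b, t) ∈ U}) {V : Set B} (hV : IsOpen V) :
    MeasurableSet {t : T | ∀ b ∈ V, (b, t) ∈ U} := by
  set Km : ℕ → Set B := fun m => {b | ∀ x, x ∉ V → (1/2)^m ≤ dist b x} with hKm
  have hKmcl : ∀ m, IsClosed (Km m) := by
    intro m
    have : Km m = ⋂ (x : B) (_ : x ∉ V), {b | (1/2)^m ≤ dist b x} := by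
      ext b
      simp only [hKm, mem_iInter, mem_setOf_eq]
    rw [this]
    refine isClosed_iInter fun x => isClosed_iInter fun _ => ?_
    exact IsClosed.preimage (Continuous.dist continuous_id continuous_const) isClosed_Ici
  have hKmco : ∀ m, IsCompact (Km m) := fun m => (hKmcl m).isCompact
  have hKmV : ∀ m, Km m ⊆ V := by
    intro m b hb
    by_contra hbV
    have := hb b hbV
    rw [dist_self] at this
    have : (0:ℝ) < (1/2)^m := pow_pos (by norm_num) m
    linarith [hb b hbV, dist_self b]
  have hVKm : V ⊆ ⋃ m, Km m := by
    intro b hb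
    obtain ⟨ε, hε, hball⟩ := Metric.isOpen_iff.1 hV b hb
    obtain ⟨m, hm⟩ := exists_pow_lt_of_lt_one hε (by norm_num : (1/2 : ℝ) < 1)
    refine mem_iUnion.2 ⟨m, fun x hx => ?_⟩
    by_contra hlt
    push_neg at hlt
    exact hx (hball (by rw [mem_ball, dist_comm]; linarith))
  have hid : {t : T | ∀ b ∈ V, (b, t) ∈ U} =
      ⋂ m, {t : T | ∃ b ∈ Km m, (b, t) ∈ Uᶜ}ᶜ := by
    ext t
    simp only [mem_iInter, mem_compl_iff, mem_setOf_eq, not_exists, not_and]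
    constructor
    · intro h m b hbm hbc
      exact hbc (h b (hKmV m hbm))
    · intro h b hbV
      obtain ⟨m, hbm⟩ := mem_iUnion.1 (hVKm hbV)
      by_contra hbu
      exact h m b hbm hbu
  rw [hid]
  refine MeasurableSet.iInter fun m => MeasurableSet.compl ?_
  refine measurableSet_exists_mem_compact Uᶜ hU.compl (fun t => ?_) (hKmco m)
  exact (hopen t).isClosed_compl

end Proj

end Stmt15

/-- A fiberwise-open Borel subset of `B × T`, with `B` a compact connected
locally connected Polish space and `T` standard Borel, is a countable union
of open prisms `V × S` with `V` open connected and `S` Borel. -/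
theorem stmt_15 {B T : Type*} [TopologicalSpace B] [PolishSpace B]
    [CompactSpace B] [ConnectedSpace B] [LocallyConnectedSpace B]
    [MeasurableSpace B] [BorelSpace B]
    [MeasurableSpace T] [StandardBorelSpace T]
    (U : Set (B × T)) (hU : MeasurableSet U)
    (hopen : ∀ t : T, IsOpen {b : B | (b, t) ∈ U}) :
    ∃ (V : ℕ → Set B) (S : ℕ → Set T),
      (∀ n, IsOpen (V n)) ∧ (∀ n, IsPreconnected (V n)) ∧
      (∀ n, MeasurableSet (S n)) ∧
      U = ⋃ n, V n ×ˢ S n := by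
  classical
  cases isEmpty_or_nonempty B with
  | inl hBe =>
    refine ⟨fun _ => ∅, fun _ => ∅, fun _ => isOpen_empty, fun _ => isPreconnected_empty,
      fun _ => MeasurableSet.empty, ?_⟩
    have : U = ∅ := eq_empty_of_isEmpty U
    rw [this]
    simp
  | inr hBne =>
  letI := upgradeStandardBorel T
  letI := upgradeIsCompletelyMetrizable B
  -- countable basis of B
  obtain ⟨bas, hbc, hbne, hbt⟩ := TopologicalSpace.exists_countable_basis B
  have hbasne : bas.Nonempty := by
    by_contra hb
    rw [not_nonempty_iff_eq_empty] at hb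
    have : (univ : Set B) = ∅ := by
      have := hbt.sUnion_eq
      rw [hb] at this
      simpa using this.symm
    exact (hBne.elim fun b => (eq_empty_iff_forall_notMem.1 this b (mem_univ b)))
  obtain ⟨W, hW⟩ := hbc.exists_eq_range hbasne
  have hWopen : ∀ k, IsOpen (W k) := by
    intro k
    refine hbt.isOpen ?_
    rw [hW]
    exact mem_range_self k
  -- dense sequence
  have hsep : TopologicalSpace.SeparableSpace B := inferInstance
  set d : ℕ → B := TopologicalSpace.denseSeq B with hd
  have hdr : DenseRange d := TopologicalSpace.denseRange_denseSeq B
  -- the prisms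
  set V : ℕ → Set B := fun n =>
    if d (Nat.unpair n).2 ∈ W (Nat.unpair n).1 then
      connectedComponentIn (W (Nat.unpair n).1) (d (Nat.unpair n).2) else ∅ with hV
  set S : ℕ → Set T := fun n => {t | ∀ b ∈ V n, (b, t) ∈ U} with hS
  have hVopen : ∀ n, IsOpen (V n) := by
    intro n
    rw [hV]
    dsimp only
    split
    · exact (hWopen _).connectedComponentIn
    · exact isOpen_empty
  have hVconn : ∀ n, IsPreconnected (V n) := by
    intro n
    rw [hV]
    dsimp only
    split
    · exact isPreconnected_connectedComponentIn
    · exact isPreconnected_empty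
  have hSmeas : ∀ n, MeasurableSet (S n) :=
    fun n => Stmt15.measurableSet_forall_mem_open U hU hopen (hVopen n)
  refine ⟨V, S, hVopen, hVconn, hSmeas, ?_⟩
  ext p
  simp only [mem_iUnion, mem_prod]
  constructor
  · intro hp
    -- find a basis element around p.1 inside the fiber
    obtain ⟨Wk, hWkb, hbW, hWU⟩ := hbt.exists_subset_of_mem_open (a := p.1)
      (show p.1 ∈ {b : B | (b, p.2) ∈ U} from hp) (hopen p.2)
    obtain ⟨k, rfl⟩ : ∃ k, W k = Wk := by
      have : Wk ∈ range W := by rw [← hW]; exact hWkb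
      obtain ⟨k, hk⟩ := this
      exact ⟨k, hk⟩
    set C := connectedComponentIn (W k) p.1 with hC
    have hCopen : IsOpen C := (hWopen k).connectedComponentIn
    have hCne : C.Nonempty := ⟨p.1, mem_connectedComponentIn hbW⟩
    obtain ⟨j, hb'C⟩ := hdr.exists_mem_open hCopen hCne
    have hdjW : d j ∈ W k := connectedComponentIn_subset _ _ hb'C
    refine ⟨Nat.pair k j, ?_, ?_⟩
    · rw [hV]
      dsimp only
      rw [Nat.unpair_pair]
      dsimp only
      rw [if_pos hdjW, ← connectedComponentIn_eq hb'C]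
      exact mem_connectedComponentIn hbW
    · rw [hS]
      dsimp only
      rw [hV]
      dsimp only
      rw [Nat.unpair_pair]
      dsimp only
      rw [if_pos hdjW, ← connectedComponentIn_eq hb'C]
      intro b hb
      exact hWU (connectedComponentIn_subset _ _ hb)
  · rintro ⟨n, h1, h2⟩
    have := h2 p.1 h1
    rwa [Prod.mk.eta] at this
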